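/- Let ReLU(v) denote the componentwise map v ↦ max(v, 0), and let U, W, V, D₁, D₂, D₃ be matrices with all entries nonnegative (of compatible dimensions). For a sequence of inputs u₁, …, u_T ∈ ℝᵈ write û_t = (u_t, −u_t) ∈ ℝ^{2d}, and define recursively (with z₀ = 0 and û₀ = 0): z_t = ReLU(U û_t + W z_{t−1} + D₂ û_{t−1}) and y_t = ReLU(V z_t + D₁ z_{t−1} + D₃ û_t) for t = 1, …, T. Then for each t, every coordinate of y_t is a convex function of the concatenated input (u₁, …, u_t) ∈ ℝ^{t·d}. -/

import Mathlib

/-- The hidden state of the recurrent ReLU network: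
`z₀ = 0` and `z_{t+1} = ReLU (U û_{t+1} + W z_t + D₂ û_t)`,
where `uh : ℕ → (Fin d ⊕ Fin d → ℝ)` is the sequence of (expanded) inputs. -/
noncomputable def zstate (d p : ℕ) (U : Matrix (Fin p) (Fin d ⊕ Fin d) ℝ)
    (W : Matrix (Fin p) (Fin p) ℝ) (D2 : Matrix (Fin p) (Fin d ⊕ Fin d) ℝ)
    (uh : ℕ → (Fin d ⊕ Fin d → ℝ)) : ℕ → Fin p → ℝ
  | 0 => 0
  | (t + 1) => fun j =>
      max ((U.mulVec (uh (t + 1)) + W.mulVec (zstate d p U W D2 uh t) +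
        D2.mulVec (uh t)) j) 0

section Aux

variable {E : Type*} [AddCommGroup E] [Module ℝ E]

lemma convexOn_finset_sum {ι : Type*} (s : Finset ι) (f : ι → E → ℝ)
    (hf : ∀ i ∈ s, ConvexOn ℝ Set.univ (f i)) :
    ConvexOn ℝ Set.univ (fun x => ∑ i ∈ s, f i x) := by
  classical
  induction s using Finset.induction_on with
  | empty => simpa using convexOn_const 0 convex_univ
  | @insert a s hnot ih =>
    simp only [Finset.sum_insert hnot]
    exact (hf a (Finset.mem_insert_self a s)).add
      (ih fun i hi => hf i (Finset.mem_insert_of_mem hi))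

lemma convexOn_mulVec {m n : Type*} [Fintype n] (M : Matrix m n ℝ)
    (hM : ∀ j l, 0 ≤ M j l) (f : E → n → ℝ)
    (hf : ∀ l, ConvexOn ℝ Set.univ fun x => f x l) (j : m) :
    ConvexOn ℝ Set.univ (fun x => M.mulVec (f x) j) := by
  have : (fun x => M.mulVec (f x) j) = fun x => ∑ l, M j l * f x l := by
    funext x
    simp [Matrix.mulVec, dotProduct]
  rw [this]
  exact convexOn_finset_sum _ _ fun l _ => by
    simpa [smul_eq_mul] using (hf l).smul (hM j l)

end Aux

/-- **Proposition 2 (input convexity of ICRNN).**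
Let `U, W, V, D₁, D₂, D₃` be matrices with all entries nonnegative.  For inputs
`u₁, …, u_T ∈ ℝᵈ` set `û_t = (u_t, -u_t)` (with `û₀ = 0`, `z₀ = 0`) and define
`z_t = ReLU (U û_t + W z_{t-1} + D₂ û_{t-1})`,
`y_t = ReLU (V z_t + D₁ z_{t-1} + D₃ û_t)`.
Then for each `1 ≤ t ≤ T`, every coordinate of `y_t` is a convex function of the
concatenated input `(u₁, …, u_T)`. -/
theorem icrnn_inputConvex (d p q T : ℕ)
    (U : Matrix (Fin p) (Fin d ⊕ Fin d) ℝ)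
    (W : Matrix (Fin p) (Fin p) ℝ)
    (V : Matrix (Fin q) (Fin p) ℝ)
    (D1 : Matrix (Fin q) (Fin p) ℝ)
    (D2 : Matrix (Fin p) (Fin d ⊕ Fin d) ℝ)
    (D3 : Matrix (Fin q) (Fin d ⊕ Fin d) ℝ)
    (hU : ∀ j l, 0 ≤ U j l) (hW : ∀ j l, 0 ≤ W j l) (hV : ∀ j l, 0 ≤ V j l)
    (hD1 : ∀ j l, 0 ≤ D1 j l) (hD2 : ∀ j l, 0 ≤ D2 j l) (hD3 : ∀ j l, 0 ≤ D3 j l)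
    (t : ℕ) (ht1 : 1 ≤ t) (htT : t ≤ T) (j : Fin q) :
    ConvexOn ℝ Set.univ (fun u : Fin T → Fin d → ℝ =>
      let uh : ℕ → (Fin d ⊕ Fin d → ℝ) := fun s =>
        if h : 1 ≤ s ∧ s ≤ T then
          Sum.elim (u ⟨s - 1, by omega⟩) (fun l => -(u ⟨s - 1, by omega⟩ l))
        else 0
      max ((V.mulVec (zstate d p U W D2 uh t) +
        D1.mulVec (zstate d p U W D2 uh (t - 1)) + D3.mulVec (uh t)) j) 0) := by
  set uh : (Fin T → Fin d → ℝ) → ℕ → (Fin d ⊕ Fin d → ℝ) := fun u s =>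
    if h : 1 ≤ s ∧ s ≤ T then
      Sum.elim (u ⟨s - 1, by omega⟩) (fun l => -(u ⟨s - 1, by omega⟩ l))
    else 0 with huh
  -- each coordinate of uh is linear, hence convex
  have huhconv : ∀ s l, ConvexOn ℝ Set.univ (fun u => uh u s l) := by
    intro s l
    by_cases h : 1 ≤ s ∧ s ≤ T
    · cases l with
      | inl l =>
        have : (fun u => uh u s (Sum.inl l)) =
            fun u : Fin T → Fin d → ℝ => u ⟨s - 1, by omega⟩ l := by
          funext u; simp [huh, h]
        rw [this]
        exact (LinearMap.proj l ∘ₗ LinearMap.proj (⟨s - 1, by omega⟩ : Fin T)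
          : (Fin T → Fin d → ℝ) →ₗ[ℝ] ℝ).convexOn convex_univ
      | inr l =>
        have : (fun u => uh u s (Sum.inr l)) =
            fun u : Fin T → Fin d → ℝ => -(u ⟨s - 1, by omega⟩ l) := by
          funext u; simp [huh, h]
        rw [this]
        exact ((-(LinearMap.proj l ∘ₗ LinearMap.proj (⟨s - 1, by omega⟩ : Fin T)
          : (Fin T → Fin d → ℝ) →ₗ[ℝ] ℝ))).convexOn convex_univ
    · have : (fun u => uh u s l) = fun _ => (0 : ℝ) := by
        funext u; simp [huh, h]
      rw [this]
      exact convexOn_const 0 convex_univ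
  -- each coordinate of the state is convex
  have hz : ∀ s k, ConvexOn ℝ Set.univ (fun u => zstate d p U W D2 (uh u) s k) := by
    intro s
    induction s with
    | zero => intro k; simpa [zstate] using convexOn_const 0 convex_univ
    | succ n ih =>
      intro k
      have h1 := convexOn_mulVec U hU (fun u => uh u (n + 1)) (huhconv (n + 1)) k
      have h2 := convexOn_mulVec W hW (fun u => zstate d p U W D2 (uh u) n) ih k
      have h3 := convexOn_mulVec D2 hD2 (fun u => uh u n) (huhconv n) k
      have := (((h1.add h2).add h3).sup (convexOn_const 0 convex_univ))
      have heq : (fun u => zstate d p U W D2 (uh u) (n + 1) k) =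
          (((fun u => U.mulVec (uh u (n + 1)) k) +
            (fun u => W.mulVec (zstate d p U W D2 (uh u) n) k)) +
            (fun u => D2.mulVec (uh u n) k)) ⊔ (fun _ => (0 : ℝ)) := by
        funext u
        simp [zstate, Pi.sup_apply, Pi.add_apply]
      rw [heq]
      exact this
  have h1 := convexOn_mulVec V hV (fun u => zstate d p U W D2 (uh u) t) (hz t) j
  have h2 := convexOn_mulVec D1 hD1 (fun u => zstate d p U W D2 (uh u) (t - 1)) (hz (t - 1)) j
  have h3 := convexOn_mulVec D3 hD3 (fun u => uh u t) (huhconv t) j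
  have := (((h1.add h2).add h3).sup (convexOn_const 0 convex_univ))
  have heq : (fun u : Fin T → Fin d → ℝ =>
      max ((V.mulVec (zstate d p U W D2 (uh u) t) +
        D1.mulVec (zstate d p U W D2 (uh u) (t - 1)) + D3.mulVec (uh u t)) j) 0) =
      (((fun u => V.mulVec (zstate d p U W D2 (uh u) t) j) +
        (fun u => D1.mulVec (zstate d p U W D2 (uh u) (t - 1)) j)) +
        (fun u => D3.mulVec (uh u t) j)) ⊔ (fun _ => (0 : ℝ)) := by
    funext u
    simp [Pi.sup_apply, Pi.add_apply]
  rw [heq]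
  exact this
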